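/- (Ree's inequality, special case s = 3) Let g₁, g₂, g₃ be permutations of a finite set of n elements generating a transitive group, with g₁g₂g₃ = 1. If cᵢ denotes the number of cycles of gᵢ (including fixed points), then c₁ + c₂ + c₃ ≤ n + 2. -/

import Mathlib

/-- The number of cycles (including fixed points) of a permutation `g`,
counted as the number of orbits of the cyclic subgroup generated by `g`. -/
noncomputable def cyclesCount {X : Type*} (g : Equiv.Perm X) : ℕ :=
  Nat.card (MulAction.orbitRel.Quotient (Subgroup.zpowers g) X)

open Equiv LinearMap Module Submodule

namespace ReeAux

set_option linter.unusedSectionVars false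

variable {X : Type*}

/-- Precomposition action of a permutation on functions (contravariant). -/
noncomputable def P (g : Perm X) : (X → ℚ) →ₗ[ℚ] (X → ℚ) := LinearMap.funLeft ℚ ℚ ⇑g

/-- `P g - 1`. -/
noncomputable def L (g : Perm X) : (X → ℚ) →ₗ[ℚ] (X → ℚ) := P g - LinearMap.id

@[simp] lemma P_apply (g : Perm X) (v : X → ℚ) (x : X) : P g v x = v (g x) := rfl

@[simp] lemma L_apply (g : Perm X) (v : X → ℚ) (x : X) : L g v x = v (g x) - v x := rfl

lemma L_mul (a b : Perm X) (v : X → ℚ) : L (a * b) v = L b (P a v) + L a v := by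
  funext x; simp [Perm.mul_apply]

lemma L_inv (a : Perm X) (v : X → ℚ) : L a⁻¹ v = -(L a (P a⁻¹ v)) := by
  funext x; simp [Perm.inv_def]

lemma P_L (w c : Perm X) (u : X → ℚ) : P w (L c u) = L (c * w) u - L w u := by
  funext x; simp [Perm.mul_apply]

lemma P_mul (a b : Perm X) (v : X → ℚ) : P (a * b) v = P b (P a v) := by
  funext x; simp [Perm.mul_apply]

lemma P_inv_P (w : Perm X) (v : X → ℚ) : P w⁻¹ (P w v) = v := by
  funext x; simp [Perm.inv_def]

/-- The subgroup of permutations `w` with `(P w - 1) V ⊆ M` and `P w M ⊆ M`, `P w⁻¹ M ⊆ M`. -/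
def invar (M : Submodule ℚ (X → ℚ)) : Subgroup (Perm X) where
  carrier := {w | (∀ v, P w v - v ∈ M) ∧ (∀ v ∈ M, P w v ∈ M) ∧ (∀ v ∈ M, P w⁻¹ v ∈ M)}
  one_mem' := by
    have h1 : ∀ v : X → ℚ, P (1 : Perm X) v = v := fun v => by funext x; simp
    exact ⟨fun v => by simp [h1], fun v hv => by simp [h1, hv],
      fun v hv => by simp [inv_one, h1, hv]⟩
  mul_mem' := by
    rintro w₁ w₂ ⟨h1, h2, h3⟩ ⟨k1, k2, k3⟩
    refine ⟨fun v => ?_, fun v hv => ?_, fun v hv => ?_⟩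
    · have : P (w₁ * w₂) v - v = P w₂ (P w₁ v - v) + (P w₂ v - v) := by
        rw [map_sub, ← P_mul]; abel
      rw [this]
      exact M.add_mem (k2 _ (h1 v)) (k1 v)
    · rw [P_mul]; exact k2 _ (h2 _ hv)
    · rw [mul_inv_rev, P_mul]; exact h3 _ (k3 _ hv)
  inv_mem' := by
    rintro w ⟨h1, h2, h3⟩
    refine ⟨fun v => ?_, h3, fun v hv => by simpa using h2 v hv⟩
    have : P w⁻¹ v - v = -(P w⁻¹ (P w v - v)) := by rw [map_sub, P_inv_P]; abel
    rw [this]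
    exact M.neg_mem (h3 _ (h1 v))

lemma mem_invar_iff {M : Submodule ℚ (X → ℚ)} {w : Perm X} :
    w ∈ invar M ↔ (∀ v, P w v - v ∈ M) ∧ (∀ v ∈ M, P w v ∈ M) ∧ (∀ v ∈ M, P w⁻¹ v ∈ M) :=
  Iff.rfl

lemma a_mem_invar (a b : Perm X) :
    a ∈ invar (LinearMap.range (L a) ⊔ LinearMap.range (L b)) := by
  set M := LinearMap.range (L a) ⊔ LinearMap.range (L b) with hM
  have hLa : ∀ u, L a u ∈ M := fun u => Submodule.mem_sup_left (LinearMap.mem_range_self _ u)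
  have hLb : ∀ u, L b u ∈ M := fun u => Submodule.mem_sup_right (LinearMap.mem_range_self _ u)
  have hLainv : ∀ u, L a⁻¹ u ∈ M := fun u => by rw [L_inv]; exact M.neg_mem (hLa _)
  have step : ∀ w : Perm X, (∀ u, P w (L a u) ∈ M) → (∀ u, P w (L b u) ∈ M) →
      ∀ v ∈ M, P w v ∈ M := by
    intro w hwa hwb v hv
    have hle : M ≤ M.comap (P w) := by
      rw [hM]
      refine sup_le ?_ ?_ <;> rintro _ ⟨u, rfl⟩
      · exact hwa u
      · exact hwb u
    exact hle hv
  refine mem_invar_iff.mpr ⟨fun v => hLa v, step a ?_ ?_, step a⁻¹ ?_ ?_⟩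
  · intro u
    rw [P_L]
    exact M.sub_mem (by rw [L_mul]; exact M.add_mem (hLa _) (hLa _)) (hLa u)
  · intro u
    rw [P_L]
    exact M.sub_mem (by rw [L_mul]; exact M.add_mem (hLa _) (hLb _)) (hLa u)
  · intro u
    rw [P_L]
    exact M.sub_mem (by rw [L_mul]; exact M.add_mem (hLainv _) (hLa _)) (hLainv u)
  · intro u
    rw [P_L]
    exact M.sub_mem (by rw [L_mul]; exact M.add_mem (hLainv _) (hLb _)) (hLainv u)

lemma finrank_span_singleton_le (u : X → ℚ) : finrank ℚ ↥(span ℚ {u}) ≤ 1 := by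
  rw [LinearMap.span_singleton_eq_range]
  exact (LinearMap.finrank_range_le _).trans (by simp)

/-- permutations fixing a given function under precomposition -/
def stab (v : X → ℚ) : Subgroup (Perm X) where
  carrier := {h | ∀ x, v (h x) = v x}
  one_mem' := by intro x; simp
  mul_mem' := by
    intro p q hp hq x
    simp only [Perm.mul_apply]
    rw [hp, hq]
  inv_mem' := by
    intro p hp x
    have h := hp (p⁻¹ x)
    rw [show p (p⁻¹ x) = x from p.apply_symm_apply x] at h
    exact h.symm

lemma mem_stab_iff {v : X → ℚ} {h : Perm X} : h ∈ stab v ↔ ∀ x, v (h x) = v x := Iff.rfl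

variable [Fintype X]

lemma claimA [DecidableEq X] [Nonempty X] (a b : Perm X)
    (hsub : ∀ w : Perm X, w ∈ Subgroup.closure ({a, b} : Set (Perm X)) →
      ∀ v, P w v - v ∈ LinearMap.range (L a) ⊔ LinearMap.range (L b))
    (htr : MulAction.IsPretransitive (Subgroup.closure ({a, b} : Set (Perm X))) X) :
    Fintype.card X ≤ finrank ℚ ↥(LinearMap.range (L a) ⊔ LinearMap.range (L b)) + 1 := by
  set M := LinearMap.range (L a) ⊔ LinearMap.range (L b) with hM
  set one : X → ℚ := fun _ => 1 with hone
  have hdiff : ∀ x y : X, (Pi.single x 1 - Pi.single y 1 : X → ℚ) ∈ M := by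
    intro x y
    obtain ⟨w, hw⟩ := MulAction.exists_smul_eq (Subgroup.closure ({a, b} : Set (Perm X))) x y
    have hw' : (w : Perm X) x = y := hw
    have h1 : P (w : Perm X) (Pi.single y 1) = Pi.single x 1 := by
      funext z
      simp only [P_apply, Pi.single_apply]
      congr 1
      rw [← hw']
      simp [Equiv.apply_eq_iff_eq, eq_iff_iff]
    have h2 := hsub (w : Perm X) w.2 (Pi.single y 1)
    rwa [h1] at h2
  have hsingle : ∀ x : X, (Pi.single x 1 : X → ℚ) ∈ M ⊔ span ℚ {one} := by
    intro x
    have hcard : ((Fintype.card X : ℚ)) ≠ 0 := by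
      simp [Fintype.card_ne_zero]
    have hsum : one - ∑ y : X, ((Pi.single y 1 : X → ℚ) - Pi.single x 1)
        = (Fintype.card X : ℚ) • (Pi.single x 1 : X → ℚ) := by
      rw [Finset.sum_sub_distrib, Finset.sum_const, Finset.card_univ,
        Finset.univ_sum_single (fun _ => (1:ℚ))]
      rw [Nat.cast_smul_eq_nsmul]
      abel
    have heq : (Pi.single x 1 : X → ℚ)
        = (Fintype.card X : ℚ)⁻¹ •
          (one - ∑ y : X, ((Pi.single y 1 : X → ℚ) - Pi.single x 1)) := by
      rw [hsum, smul_smul, inv_mul_cancel₀ hcard, one_smul]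
    rw [heq]
    refine Submodule.smul_mem _ _ (Submodule.sub_mem _ ?_ ?_)
    · exact Submodule.mem_sup_right (Submodule.subset_span rfl)
    · exact Submodule.sum_mem _ fun y _ => Submodule.mem_sup_left (hdiff y x)
  have htop : (⊤ : Submodule ℚ (X → ℚ)) ≤ M ⊔ span ℚ {one} := by
    intro v _
    have hv : v = ∑ x : X, Pi.single x (v x) := (Finset.univ_sum_single v).symm
    rw [hv]
    refine Submodule.sum_mem _ fun x _ => ?_
    have : (Pi.single x (v x) : X → ℚ) = (v x) • (Pi.single x 1 : X → ℚ) := by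
      funext z
      simp [Pi.single_apply]
    rw [this]
    exact Submodule.smul_mem _ _ (hsingle x)
  calc Fintype.card X = finrank ℚ (X → ℚ) := (Module.finrank_fintype_fun_eq_card ℚ).symm
    _ = finrank ℚ ↥(⊤ : Submodule ℚ (X → ℚ)) := (finrank_top _ _).symm
    _ ≤ finrank ℚ ↥(M ⊔ span ℚ {one}) := Submodule.finrank_mono (top_le_iff.mp htop ▸ le_rfl)
    _ ≤ finrank ℚ ↥M + finrank ℚ ↥(span ℚ {one}) := by
        have h := Submodule.finrank_sup_add_finrank_inf_eq M (span ℚ {one})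
        omega
    _ ≤ finrank ℚ ↥M + 1 := by
        have := finrank_span_singleton_le one
        omega

lemma cycles_eq (g : Perm X) : cyclesCount g = finrank ℚ ↥(LinearMap.ker (L g)) := by
  classical
  set Q := MulAction.orbitRel.Quotient (Subgroup.zpowers g) X with hQ
  have hsurj : Function.Surjective (Quotient.mk'' : X → Q) := Quotient.mk''_surjective
  set Φ : (Q → ℚ) →ₗ[ℚ] (X → ℚ) := LinearMap.funLeft ℚ ℚ (Quotient.mk'') with hΦ
  have hinj : Function.Injective ⇑Φ := LinearMap.funLeft_injective_of_surjective ℚ ℚ _ hsurj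
  have hrange : LinearMap.range Φ = LinearMap.ker (L g) := by
    apply le_antisymm
    · rintro _ ⟨f, rfl⟩
      rw [LinearMap.mem_ker]
      funext x
      have hmk : (Quotient.mk'' (g x) : Q) = Quotient.mk'' x := by
        apply Quotient.sound'
        exact ⟨⟨g, Subgroup.mem_zpowers g⟩, rfl⟩
      simp only [L_apply, hΦ, LinearMap.funLeft_apply, Function.comp_apply, hmk]
      simp [hmk]
    · intro v hv
      have hv' : ∀ x, v (g x) = v x := by
        intro x
        have h := congrFun (LinearMap.mem_ker.mp hv) x
        simp only [L_apply, Pi.zero_apply] at h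
        linarith
      have hfix : ∀ h ∈ Subgroup.zpowers g, ∀ x, v (h x) = v x := fun h hh =>
        (Subgroup.zpowers_le.mpr (mem_stab_iff.mpr hv')) hh
      have hresp : ∀ x y : X,
          Setoid.r (self := MulAction.orbitRel (Subgroup.zpowers g) X) x y → v x = v y := by
        intro x y hxy
        obtain ⟨h, rfl⟩ := hxy
        exact hfix (h : Perm X) h.2 y
      refine ⟨Quotient.lift v hresp, ?_⟩
      funext x
      rfl
  haveI : Finite Q := Quotient.finite (MulAction.orbitRel (Subgroup.zpowers g) X)
  haveI : Fintype Q := Fintype.ofFinite Q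
  rw [cyclesCount, ← hrange, LinearMap.finrank_range_of_inj hinj,
    Module.finrank_fintype_fun_eq_card, Nat.card_eq_fintype_card]

end ReeAux

open ReeAux in
theorem stmt_10 {X : Type*} [Fintype X] (n : ℕ) (hX : Fintype.card X = n)
    (g₁ g₂ g₃ : Equiv.Perm X) (hprod : g₁ * g₂ * g₃ = 1)
    (htrans : MulAction.IsPretransitive (Subgroup.closure ({g₁, g₂, g₃} : Set (Equiv.Perm X))) X) :
    cyclesCount g₁ + cyclesCount g₂ + cyclesCount g₃ ≤ n + 2 := by
  classical
  rcases isEmpty_or_nonempty X with hE | hNE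
  · have hzero : ∀ g : Perm X, cyclesCount g = 0 := by
      intro g
      haveI : IsEmpty (MulAction.orbitRel.Quotient (Subgroup.zpowers g) X) :=
        ⟨fun q => Quotient.inductionOn' q fun x => (hE.false x).elim⟩
      simp [cyclesCount]
    simp [hzero]
  · set I1 := LinearMap.range (L g₁) with hI1
    set I2 := LinearMap.range (L g₂) with hI2
    set I3 := LinearMap.range (L g₃) with hI3
    set A : ↥I1 →ₗ[ℚ] (X → ℚ) := (P g₃).comp ((P g₂).comp I1.subtype) with hA
    set B : ↥I2 →ₗ[ℚ] (X → ℚ) := (P g₃).comp I2.subtype with hB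
    set hmap : (↥I1 × ↥I2 × ↥I3) →ₗ[ℚ] (X → ℚ) :=
      LinearMap.coprod A (LinearMap.coprod B I3.subtype) with hhm
    set fmap : (X → ℚ) →ₗ[ℚ] (↥I1 × ↥I2 × ↥I3) :=
      LinearMap.prod ((L g₁).codRestrict I1 fun v => LinearMap.mem_range_self _ v)
        (LinearMap.prod ((L g₂).codRestrict I2 fun v => LinearMap.mem_range_self _ v)
          ((L g₃).codRestrict I3 fun v => LinearMap.mem_range_self _ v)) with hfm
    have hg123 : ∀ x : X, g₁ (g₂ (g₃ x)) = x := by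
      intro x
      rw [← Perm.mul_apply, ← Perm.mul_apply, hprod, Perm.one_apply]
    -- h ∘ f = 0
    have hcomp : hmap.comp fmap = 0 := by
      apply LinearMap.ext
      intro v
      funext x
      simp only [hhm, hfm, hA, hB, LinearMap.comp_apply, LinearMap.coprod_apply,
        LinearMap.prod_apply, Function.prod, LinearMap.codRestrict_apply, Submodule.coe_subtype,
        LinearMap.zero_apply, Pi.zero_apply, Pi.add_apply, P_apply, L_apply]
      rw [hg123]
      ring
    -- ker f is at most the constants
    have hker : LinearMap.ker fmap ≤ span ℚ {(fun _ => (1:ℚ) : X → ℚ)} := by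
      intro v hv
      rw [LinearMap.mem_ker] at hv
      have h1 : L g₁ v = 0 := by
        have h := congrArg (fun p : (↥I1 × ↥I2 × ↥I3) => (p.1 : X → ℚ)) hv
        simpa [hfm] using h
      have h2 : L g₂ v = 0 := by
        have h := congrArg (fun p : (↥I1 × ↥I2 × ↥I3) => (p.2.1 : X → ℚ)) hv
        simpa [hfm] using h
      have h3 : L g₃ v = 0 := by
        have h := congrArg (fun p : (↥I1 × ↥I2 × ↥I3) => (p.2.2 : X → ℚ)) hv
        simpa [hfm] using h
      have hfix : ∀ g : Perm X, L g v = 0 → ∀ x, v (g x) = v x := by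
        intro g hg x
        have h := congrFun hg x
        simp only [ReeAux.L_apply, Pi.zero_apply] at h
        linarith
      have hstab : Subgroup.closure ({g₁, g₂, g₃} : Set (Perm X)) ≤ stab v := by
        rw [Subgroup.closure_le]
        intro c hc
        simp only [Set.mem_insert_iff, Set.mem_singleton_iff] at hc
        rcases hc with rfl | rfl | rfl
        · exact mem_stab_iff.mpr (hfix _ h1)
        · exact mem_stab_iff.mpr (hfix _ h2)
        · exact mem_stab_iff.mpr (hfix _ h3)
      have hconst : ∀ x y : X, v x = v y := by
        intro x y
        obtain ⟨w, hw⟩ :=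
          MulAction.exists_smul_eq (Subgroup.closure ({g₁, g₂, g₃} : Set (Perm X))) y x
        have hw' : (w : Perm X) y = x := hw
        have h := (hstab w.2) y
        rw [hw'] at h
        exact h
      obtain ⟨x0⟩ := hNE
      refine Submodule.mem_span_singleton.mpr ⟨v x0, ?_⟩
      funext y
      simp [hconst y x0]
    -- range h contains range (L (g₂ * g₃)) ⊔ range (L g₃)
    have hsup_le : LinearMap.range (L (g₂ * g₃)) ⊔ I3 ≤ LinearMap.range hmap := by
      refine sup_le ?_ ?_ <;> rintro _ ⟨u, rfl⟩
      · refine ⟨(0, ⟨L g₂ u, LinearMap.mem_range_self _ _⟩,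
          ⟨L g₃ u, LinearMap.mem_range_self _ _⟩), ?_⟩
        have hPL : P g₃ (L g₂ u) = L (g₂ * g₃) u - L g₃ u := P_L _ _ _
        simp only [hhm, hA, hB, LinearMap.coprod_apply, LinearMap.comp_apply,
          Submodule.coe_subtype, map_zero, hPL]
        abel
      · exact ⟨(0, 0, ⟨L g₃ u, LinearMap.mem_range_self _ _⟩), by
          simp [hhm, hA, hB]⟩
    -- transitivity for the pair (g₂ * g₃, g₃)
    have hcl : Subgroup.closure ({g₁, g₂, g₃} : Set (Perm X))
        ≤ Subgroup.closure ({g₂ * g₃, g₃} : Set (Perm X)) := by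
      rw [Subgroup.closure_le]
      have m1 : g₂ * g₃ ∈ Subgroup.closure ({g₂ * g₃, g₃} : Set (Perm X)) :=
        Subgroup.subset_closure (by simp)
      have m2 : g₃ ∈ Subgroup.closure ({g₂ * g₃, g₃} : Set (Perm X)) :=
        Subgroup.subset_closure (by simp)
      intro c hc
      simp only [Set.mem_insert_iff, Set.mem_singleton_iff] at hc
      rcases hc with rfl | rfl | rfl
      · have h : c * (g₂ * g₃) = 1 := by rw [← mul_assoc, hprod]
        rw [eq_inv_of_mul_eq_one_left h]
        exact inv_mem m1
      · simpa using mul_mem m1 (inv_mem m2)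
      · exact m2
    haveI htr23 : MulAction.IsPretransitive
        (Subgroup.closure ({g₂ * g₃, g₃} : Set (Perm X))) X := by
      constructor
      intro x y
      obtain ⟨w, hw⟩ :=
        MulAction.exists_smul_eq (Subgroup.closure ({g₁, g₂, g₃} : Set (Perm X))) x y
      exact ⟨⟨w.1, hcl w.2⟩, hw⟩
    -- the invariance subgroup gives the hypothesis of claimA
    have hinv : Subgroup.closure ({g₂ * g₃, g₃} : Set (Perm X))
        ≤ invar (LinearMap.range (L (g₂ * g₃)) ⊔ LinearMap.range (L g₃)) := by
      rw [Subgroup.closure_le]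
      intro c hc
      simp only [Set.mem_insert_iff, Set.mem_singleton_iff] at hc
      rcases hc with rfl | rfl
      · exact a_mem_invar _ _
      · rw [sup_comm]
        exact a_mem_invar _ _
    have hclaim := claimA (g₂ * g₃) g₃
      (fun w hw v => (mem_invar_iff.mp (hinv hw)).1 v) htr23
    rw [← hI3] at hclaim
    -- rank computations
    have hn : finrank ℚ (X → ℚ) = n := by
      rw [Module.finrank_fintype_fun_eq_card, hX]
    have e1 := LinearMap.finrank_range_add_finrank_ker (L g₁)
    have e2 := LinearMap.finrank_range_add_finrank_ker (L g₂)
    have e3 := LinearMap.finrank_range_add_finrank_ker (L g₃)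
    have ef := LinearMap.finrank_range_add_finrank_ker fmap
    have eh := LinearMap.finrank_range_add_finrank_ker hmap
    have hdom : finrank ℚ (↥I1 × ↥I2 × ↥I3)
        = finrank ℚ ↥I1 + (finrank ℚ ↥I2 + finrank ℚ ↥I3) := by
      rw [Module.finrank_prod, Module.finrank_prod]
    have hrk : finrank ℚ ↥(LinearMap.range fmap) ≤ finrank ℚ ↥(LinearMap.ker hmap) :=
      Submodule.finrank_mono (LinearMap.range_le_ker_iff.mpr hcomp)
    have hkf : finrank ℚ ↥(LinearMap.ker fmap) ≤ 1 :=
      le_trans (Submodule.finrank_mono hker) (finrank_span_singleton_le _)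
    have hrh : Fintype.card X
        ≤ finrank ℚ ↥(LinearMap.range hmap) + 1 := by
      refine hclaim.trans ?_
      have hmono := Submodule.finrank_mono hsup_le
      omega
    have hc1 : cyclesCount g₁ = finrank ℚ ↥(LinearMap.ker (L g₁)) := cycles_eq _
    have hc2 : cyclesCount g₂ = finrank ℚ ↥(LinearMap.ker (L g₂)) := cycles_eq _
    have hc3 : cyclesCount g₃ = finrank ℚ ↥(LinearMap.ker (L g₃)) := cycles_eq _
    rw [← hI1] at e1
    rw [← hI2] at e2
    rw [← hI3] at e3
    rw [hn] at e1 e2 e3 ef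
    rw [hdom] at eh
    rw [hX] at hrh
    omega
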